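/- If α is irrational, then the spectrum of the almost Mathieu operator H(α,λ,θ) is independent of θ ∈ [0,1). -/

import Mathlib

open Real

set_option maxHeartbeats 1000000
set_option synthInstance.maxHeartbeats 400000

/-- The standard orthonormal basis vector `e n` of `ℓ²(ℤ)`. -/
noncomputable def lpBasis (n : ℤ) : lp (fun _ : ℤ => ℂ) 2 := lp.single 2 n 1

namespace AMOaux

noncomputable abbrev XX := lp (fun _ : ℤ => ℂ) 2

lemma two_toReal : (2 : ENNReal).toReal = 2 := by norm_num

lemma le_of_rpow_two_le {a b : ℝ} (hb : 0 ≤ b)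
    (h : a ^ ((2:ENNReal).toReal) ≤ b ^ ((2:ENNReal).toReal)) : a ≤ b := by
  rw [two_toReal, show (2:ℝ) = ((2:ℕ):ℝ) by norm_num, Real.rpow_natCast,
    Real.rpow_natCast] at h
  nlinarith

lemma lpnorm_le {g f : XX} {C : ℝ} (hC : 0 ≤ C)
    (h : ∀ n, ‖g n‖ ≤ C * ‖f n‖) : ‖g‖ ≤ C * ‖f‖ := by
  have h2 : 0 < (2:ENNReal).toReal := by rw [two_toReal]; norm_num
  apply le_of_rpow_two_le (mul_nonneg hC (norm_nonneg f))
  rw [lp.norm_rpow_eq_tsum h2, Real.mul_rpow hC (norm_nonneg f),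
    lp.norm_rpow_eq_tsum h2, ← tsum_mul_left]
  have hsumf : Summable (fun n => ‖f n‖ ^ ((2:ENNReal).toReal)) :=
    (memℓp_gen_iff h2).1 (lp.memℓp f)
  have hsumg : Summable (fun n => ‖g n‖ ^ ((2:ENNReal).toReal)) :=
    (memℓp_gen_iff h2).1 (lp.memℓp g)
  refine Summable.tsum_le_tsum (fun n => ?_) hsumg (hsumf.mul_left _)
  calc ‖g n‖ ^ ((2:ENNReal).toReal) ≤ (C * ‖f n‖) ^ ((2:ENNReal).toReal) :=
        Real.rpow_le_rpow (norm_nonneg _) (h n) (le_of_lt h2)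
    _ = C ^ ((2:ENNReal).toReal) * ‖f n‖ ^ ((2:ENNReal).toReal) :=
        Real.mul_rpow hC (norm_nonneg _)

lemma memℓp_shift (k : ℤ) {f : ∀ _ : ℤ, ℂ} (hf : Memℓp f 2) :
    Memℓp (fun n => f (n + k)) 2 := by
  have h2 : 0 < (2:ENNReal).toReal := by rw [two_toReal]; norm_num
  rw [memℓp_gen_iff h2] at hf ⊢
  exact (Equiv.addRight k).summable_iff.2 hf

noncomputable def shiftL (k : ℤ) : XX →ₗ[ℂ] XX where
  toFun f := ⟨fun n => f (n + k), memℓp_shift k (lp.memℓp f)⟩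
  map_add' f g := by
    apply lp.ext
    funext n
    simp [lp.coeFn_add, Pi.add_apply]
    rfl
  map_smul' c f := by
    apply lp.ext
    funext n
    simp [lp.coeFn_smul, Pi.smul_apply]

lemma shiftL_norm_le (k : ℤ) (f : XX) : ‖shiftL k f‖ ≤ 1 * ‖f‖ := by
  have h2 : 0 < (2:ENNReal).toReal := by rw [two_toReal]; norm_num
  rw [one_mul]
  have key : ‖shiftL k f‖ ^ ((2:ENNReal).toReal) = ‖f‖ ^ ((2:ENNReal).toReal) := by
    rw [lp.norm_rpow_eq_tsum h2, lp.norm_rpow_eq_tsum h2]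
    exact (Equiv.addRight k).tsum_eq (fun n => ‖f n‖ ^ ((2:ENNReal).toReal))
  have h1 := norm_nonneg (shiftL k f)
  have h3 := norm_nonneg f
  rw [two_toReal, show (2:ℝ) = ((2:ℕ):ℝ) by norm_num, Real.rpow_natCast,
    Real.rpow_natCast] at key
  nlinarith

noncomputable def shiftCLM (k : ℤ) : XX →L[ℂ] XX :=
  LinearMap.mkContinuous (shiftL k) 1 (shiftL_norm_le k)

lemma shiftCLM_apply (k : ℤ) (f : XX) (n : ℤ) : (shiftCLM k f) n = f (n + k) := rfl

lemma shiftCLM_norm_le (k : ℤ) : ‖shiftCLM k‖ ≤ 1 :=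
  LinearMap.mkContinuous_norm_le _ zero_le_one _

lemma memℓp_mul {v : ℤ → ℝ} {C : ℝ} (hv : ∀ n, |v n| ≤ C) {f : ∀ _ : ℤ, ℂ}
    (hf : Memℓp f 2) : Memℓp (fun n => (v n : ℂ) * f n) 2 := by
  have h2 : 0 < (2:ENNReal).toReal := by rw [two_toReal]; norm_num
  rw [memℓp_gen_iff h2] at hf ⊢
  apply Summable.of_nonneg_of_le (fun n => Real.rpow_nonneg (norm_nonneg _) _)
    (fun n => ?_) (hf.mul_left (C ^ ((2:ENNReal).toReal)))
  have hC : 0 ≤ C := le_trans (abs_nonneg _) (hv 0)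
  calc ‖(v n : ℂ) * f n‖ ^ ((2:ENNReal).toReal)
      ≤ (C * ‖f n‖) ^ ((2:ENNReal).toReal) := by
        apply Real.rpow_le_rpow (norm_nonneg _) ?_ (le_of_lt h2)
        rw [norm_mul, Complex.norm_real]
        exact mul_le_mul_of_nonneg_right (hv n) (norm_nonneg _)
    _ = C ^ ((2:ENNReal).toReal) * ‖f n‖ ^ ((2:ENNReal).toReal) :=
        Real.mul_rpow hC (norm_nonneg _)

/-- The potential of the almost Mathieu operator. -/
noncomputable def amoV (α l θ : ℝ) (n : ℤ) : ℝ :=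
  2 * l * Real.cos (2 * π * ((n : ℝ) * α + θ))

lemma amoV_bound (α l θ : ℝ) (n : ℤ) : |amoV α l θ n| ≤ 2 * |l| := by
  rw [amoV, abs_mul, abs_mul, abs_two]
  have := Real.abs_cos_le_one (2 * π * ((n : ℝ) * α + θ))
  nlinarith [abs_nonneg l]

noncomputable def amoMulL (α l θ : ℝ) : XX →ₗ[ℂ] XX where
  toFun f := ⟨fun n => (amoV α l θ n : ℂ) * f n, memℓp_mul (amoV_bound α l θ) (lp.memℓp f)⟩
  map_add' f g := by
    apply lp.ext
    funext n
    simp [lp.coeFn_add, Pi.add_apply, mul_add]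
    rfl
  map_smul' c f := by
    apply lp.ext
    funext n
    simp only [lp.coeFn_smul, Pi.smul_apply, smul_eq_mul, RingHom.id_apply]
    ring

lemma amoMulL_norm_le (α l θ : ℝ) (f : XX) : ‖amoMulL α l θ f‖ ≤ (2 * |l|) * ‖f‖ := by
  apply lpnorm_le (by positivity)
  intro n
  have : ‖(amoMulL α l θ f) n‖ = |amoV α l θ n| * ‖f n‖ := by
    show ‖(amoV α l θ n : ℂ) * f n‖ = _
    rw [norm_mul, Complex.norm_real, Real.norm_eq_abs]
  rw [this]
  exact mul_le_mul_of_nonneg_right (amoV_bound α l θ n) (norm_nonneg _)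

noncomputable def amoMul (α l θ : ℝ) : XX →L[ℂ] XX :=
  LinearMap.mkContinuous (amoMulL α l θ) (2 * |l|) (amoMulL_norm_le α l θ)

lemma amoMul_apply (α l θ : ℝ) (f : XX) (n : ℤ) :
    (amoMul α l θ f) n = (amoV α l θ n : ℂ) * f n := rfl

/-- The almost Mathieu operator. -/
noncomputable def amoH (α l θ : ℝ) : XX →L[ℂ] XX := shiftCLM (-1) + shiftCLM 1 + amoMul α l θ

lemma amoH_apply (α l θ : ℝ) (f : XX) (n : ℤ) :
    (amoH α l θ f) n = f (n + -1) + f (n + 1) + (amoV α l θ n : ℂ) * f n := by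
  rw [amoH]
  rw [ContinuousLinearMap.add_apply, ContinuousLinearMap.add_apply,
    lp.coeFn_add, lp.coeFn_add]
  rfl

lemma lpBasis_apply (n m : ℤ) : (lpBasis n : ∀ _ : ℤ, ℂ) m = if m = n then 1 else 0 := by
  rw [lpBasis]
  by_cases h : m = n
  · subst h; rw [lp.single_apply_self, if_pos rfl]
  · rw [lp.single_apply_ne _ _ _ h, if_neg h]

lemma clm_ext {A B : XX →L[ℂ] XX} (h : ∀ n, A (lpBasis n) = B (lpBasis n)) : A = B := by
  refine ContinuousLinearMap.ext fun f => ?_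
  have hs := lp.hasSum_single (E := fun _ : ℤ => ℂ) (p := 2) (by norm_num) f
  have hsingle : ∀ n : ℤ, lp.single 2 n (f n) = f n • lpBasis n := by
    intro n
    rw [lpBasis, ← lp.single_smul, smul_eq_mul, mul_one]
  have hA : HasSum (fun n => f n • A (lpBasis n)) (A f) := by
    have := hs.mapL A
    simpa [hsingle, map_smul] using this
  have hB : HasSum (fun n => f n • B (lpBasis n)) (B f) := by
    have := hs.mapL B
    simpa [hsingle, map_smul] using this
  refine hA.unique ?_
  simpa [h] using hB

lemma amoH_single (α l θ : ℝ) (n : ℤ) :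
    amoH α l θ (lpBasis n) = lpBasis (n + 1) + lpBasis (n - 1) +
      ((amoV α l θ n : ℝ) : ℂ) • lpBasis n := by
  apply lp.ext
  funext m
  rw [amoH_apply]
  rw [lp.coeFn_add, lp.coeFn_add, Pi.add_apply, Pi.add_apply, lp.coeFn_smul, Pi.smul_apply]
  rw [lpBasis_apply, lpBasis_apply, lpBasis_apply, lpBasis_apply, lpBasis_apply]
  simp only [smul_eq_mul,
    show (m + -1 = n) ↔ (m = n + 1) by omega,
    show (m + 1 = n) ↔ (m = n - 1) by omega]
  by_cases h1 : m = n + 1 <;> by_cases h2 : m = n - 1 <;> by_cases h3 : m = n <;>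
    first | omega | simp [h1, h2, h3]

lemma shiftCLM_single (k n : ℤ) : shiftCLM k (lpBasis n) = lpBasis (n - k) := by
  apply lp.ext
  funext m
  rw [shiftCLM_apply, lpBasis_apply, lpBasis_apply]
  by_cases h : m = n - k
  · rw [if_pos (by omega), if_pos h]
  · rw [if_neg (by omega), if_neg h]

/-- The shift unit `U e_n = e_{n+1}`. -/
noncomputable def shiftUnit : (XX →L[ℂ] XX)ˣ where
  val := shiftCLM (-1)
  inv := shiftCLM 1
  val_inv := clm_ext fun n => by
    rw [ContinuousLinearMap.mul_apply, shiftCLM_single, shiftCLM_single,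
      ContinuousLinearMap.one_apply]
    norm_num
  inv_val := clm_ext fun n => by
    rw [ContinuousLinearMap.mul_apply, shiftCLM_single, shiftCLM_single,
      ContinuousLinearMap.one_apply]
    norm_num

lemma amoH_conj (α l θ : ℝ) :
    amoH α l (θ + α) = ((shiftUnit⁻¹ : _ˣ) : XX →L[ℂ] XX) * amoH α l θ *
      (((shiftUnit⁻¹ : _ˣ)⁻¹ : _ˣ) : XX →L[ℂ] XX) := by
  apply clm_ext
  intro n
  have hUinv : ((shiftUnit⁻¹ : (XX →L[ℂ] XX)ˣ) : XX →L[ℂ] XX) = shiftCLM 1 := rfl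
  have hU : (((shiftUnit⁻¹ : (XX →L[ℂ] XX)ˣ)⁻¹ : _ˣ) : XX →L[ℂ] XX) = shiftCLM (-1) := rfl
  rw [ContinuousLinearMap.mul_apply, ContinuousLinearMap.mul_apply, hU, hUinv,
    shiftCLM_single, amoH_single, show n - (-1) = n + 1 by ring, amoH_single]
  rw [map_add, map_add, map_smul, shiftCLM_single, shiftCLM_single, shiftCLM_single]
  have hv : amoV α l θ (n + 1) = amoV α l (θ + α) n := by
    rw [amoV, amoV]
    congr 2
    push_cast
    ring
  rw [hv]
  congr 1 <;> [skip; congr 1] <;> [congr 1; skip] <;> congr 1 <;> omega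

lemma amoH_period (α l θ : ℝ) : amoH α l (θ + 1) = amoH α l θ := by
  apply clm_ext
  intro n
  rw [amoH_single, amoH_single]
  have : amoV α l (θ + 1) n = amoV α l θ n := by
    rw [amoV, amoV,
      show 2 * π * ((n:ℝ) * α + (θ+1)) = 2 * π * ((n:ℝ) * α + θ) + 2 * π by ring,
      Real.cos_add_two_pi]
  rw [this]

lemma abs_cos_sub_cos_le (x y : ℝ) : |Real.cos x - Real.cos y| ≤ |x - y| := by
  rw [Real.cos_sub_cos]
  have h1 : |Real.sin ((x + y) / 2)| ≤ 1 :=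
    abs_le.2 ⟨Real.neg_one_le_sin _, Real.sin_le_one _⟩
  have h2 : |Real.sin ((x - y) / 2)| ≤ |(x - y) / 2| := Real.abs_sin_le_abs
  rw [abs_mul, abs_mul]
  have : |(-2 : ℝ)| = 2 := by norm_num
  rw [this]
  calc 2 * |Real.sin ((x+y)/2)| * |Real.sin ((x-y)/2)| ≤ 2 * 1 * |(x-y)/2| := by
        apply mul_le_mul (by nlinarith [abs_nonneg (Real.sin ((x+y)/2))]) h2 (abs_nonneg _)
        norm_num
    _ = |x - y| := by rw [abs_div]; rw [show |(2:ℝ)| = 2 by norm_num]; ring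

lemma amoH_lip (α l a b : ℝ) :
    ‖amoH α l a - amoH α l b‖ ≤ (4 * π * |l| + 1) * |a - b| := by
  have hK : (0:ℝ) ≤ 4 * π * |l| + 1 := by positivity
  apply ContinuousLinearMap.opNorm_le_bound _ (by positivity)
  intro f
  rw [ContinuousLinearMap.sub_apply]
  apply lpnorm_le (by positivity)
  intro n
  have heq : ((amoH α l a f) n : ℂ) - (amoH α l b f) n
      = ((amoV α l a n : ℂ) - (amoV α l b n : ℂ)) * f n := by
    rw [amoH_apply, amoH_apply]
    ring
  rw [lp.coeFn_sub, Pi.sub_apply, heq, norm_mul]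
  apply mul_le_mul_of_nonneg_right _ (norm_nonneg _)
  have hv : |amoV α l a n - amoV α l b n| ≤ (4 * π * |l|) * |a - b| := by
    rw [amoV, amoV, show 2 * l * Real.cos (2 * π * ((n:ℝ) * α + a))
        - 2 * l * Real.cos (2 * π * ((n:ℝ) * α + b))
        = 2 * l * (Real.cos (2 * π * ((n:ℝ) * α + a)) - Real.cos (2 * π * ((n:ℝ) * α + b)))
        by ring,
      abs_mul, abs_mul, abs_two]
    have := abs_cos_sub_cos_le (2 * π * ((n:ℝ) * α + a)) (2 * π * ((n:ℝ) * α + b))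
    have harg : (2 * π * ((n:ℝ) * α + a)) - (2 * π * ((n:ℝ) * α + b)) = 2 * π * (a - b) := by
      ring
    rw [harg] at this
    have hpi : |2 * π * (a - b)| = 2 * π * |a - b| := by
      rw [abs_mul, abs_mul, abs_two, abs_of_pos Real.pi_pos]
    rw [hpi] at this
    nlinarith [abs_nonneg l, abs_nonneg (a - b), Real.pi_pos,
      abs_nonneg (Real.cos (2 * π * ((n:ℝ) * α + a)) - Real.cos (2 * π * ((n:ℝ) * α + b)))]
  have hnorm : ‖(amoV α l a n : ℂ) - (amoV α l b n : ℂ)‖ = |amoV α l a n - amoV α l b n| := by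
    rw [← Complex.ofReal_sub, Complex.norm_real, Real.norm_eq_abs]
  rw [hnorm]
  calc |amoV α l a n - amoV α l b n| ≤ (4 * π * |l|) * |a - b| := hv
    _ ≤ (4 * π * |l| + 1) * |a - b| := by nlinarith [abs_nonneg (a-b)]

lemma lpBasis_ne_zero : lpBasis 0 ≠ 0 := by
  intro h
  have h1 : (lpBasis 0 : ∀ _ : ℤ, ℂ) 0 = 1 := by rw [lpBasis_apply]; simp
  rw [h] at h1
  rw [lp.coeFn_zero] at h1
  simp at h1

instance : Nontrivial XX := ⟨lpBasis 0, 0, lpBasis_ne_zero⟩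

instance : Nontrivial (XX →L[ℂ] XX) := by
  refine ⟨1, 0, fun h => lpBasis_ne_zero ?_⟩
  have := congrArg (fun T : XX →L[ℂ] XX => T (lpBasis 0)) h
  simpa using this

/-- The subgroup of `g`'s such that translation by `g` acts on the almost Mathieu family by
conjugation with norm-one units. -/
noncomputable def perSub (α l : ℝ) : AddSubgroup ℝ where
  carrier := {g | ∀ θ : ℝ, ∃ U : (XX →L[ℂ] XX)ˣ, ‖(U : XX →L[ℂ] XX)‖ ≤ 1 ∧
    ‖((U⁻¹ : _ˣ) : XX →L[ℂ] XX)‖ ≤ 1 ∧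
    amoH α l (θ + g) = (U : XX →L[ℂ] XX) * amoH α l θ * ((U⁻¹ : _ˣ) : XX →L[ℂ] XX)}
  zero_mem' := by
    intro θ
    refine ⟨1, ?_, ?_, ?_⟩
    · simp only [Units.val_one]
      rw [ContinuousLinearMap.one_def]
      exact ContinuousLinearMap.norm_id_le
    · simp only [inv_one, Units.val_one]
      rw [ContinuousLinearMap.one_def]
      exact ContinuousLinearMap.norm_id_le
    · simp
  add_mem' := by
    intro a b ha hb θ
    obtain ⟨Ub, hb1, hb2, hbe⟩ := hb θ
    obtain ⟨Ua, ha1, ha2, hae⟩ := ha (θ + b)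
    refine ⟨Ua * Ub, ?_, ?_, ?_⟩
    · calc ‖((Ua * Ub : _ˣ) : XX →L[ℂ] XX)‖ ≤ ‖(Ua : XX →L[ℂ] XX)‖ * ‖(Ub : XX →L[ℂ] XX)‖ :=
            norm_mul_le _ _
        _ ≤ 1 := by nlinarith [norm_nonneg (Ua : XX →L[ℂ] XX), norm_nonneg (Ub : XX →L[ℂ] XX)]
    · rw [mul_inv_rev]
      calc ‖(((Ub⁻¹ * Ua⁻¹ : _ˣ)) : XX →L[ℂ] XX)‖
          ≤ ‖((Ub⁻¹ : _ˣ) : XX →L[ℂ] XX)‖ * ‖((Ua⁻¹ : _ˣ) : XX →L[ℂ] XX)‖ := norm_mul_le _ _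
        _ ≤ 1 := by
            nlinarith [norm_nonneg ((Ub⁻¹ : _ˣ) : XX →L[ℂ] XX),
              norm_nonneg ((Ua⁻¹ : _ˣ) : XX →L[ℂ] XX)]
    · have : θ + (a + b) = (θ + b) + a := by ring
      rw [this, hae, hbe, mul_inv_rev]
      simp only [Units.val_mul, mul_assoc]
  neg_mem' := by
    intro a ha θ
    obtain ⟨U, h1, h2, he⟩ := ha (θ + -a)
    refine ⟨U⁻¹, h2, by simpa using h1, ?_⟩
    have he' : amoH α l θ = (U : XX →L[ℂ] XX) * amoH α l (θ + -a) *
        ((U⁻¹ : _ˣ) : XX →L[ℂ] XX) := by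
      rw [← he]; congr 1; ring
    rw [inv_inv, he']
    simp only [mul_assoc, Units.inv_mul_cancel_left]
    simp [Units.inv_mul]

lemma mem_perSub {α l g : ℝ} : g ∈ perSub α l ↔ ∀ θ : ℝ, ∃ U : (XX →L[ℂ] XX)ˣ,
    ‖(U : XX →L[ℂ] XX)‖ ≤ 1 ∧ ‖((U⁻¹ : _ˣ) : XX →L[ℂ] XX)‖ ≤ 1 ∧
    amoH α l (θ + g) = (U : XX →L[ℂ] XX) * amoH α l θ * ((U⁻¹ : _ˣ) : XX →L[ℂ] XX) :=
  Iff.rfl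

lemma alpha_mem_perSub (α l : ℝ) : α ∈ perSub α l := by
  rw [mem_perSub]
  intro θ
  refine ⟨shiftUnit⁻¹, ?_, ?_, amoH_conj α l θ⟩
  · show ‖shiftCLM 1‖ ≤ 1
    exact shiftCLM_norm_le 1
  · rw [inv_inv]
    show ‖shiftCLM (-1)‖ ≤ 1
    exact shiftCLM_norm_le (-1)

lemma one_mem_perSub (α l : ℝ) : (1:ℝ) ∈ perSub α l := by
  rw [mem_perSub]
  intro θ
  refine ⟨1, ?_, ?_, ?_⟩
  · simp only [Units.val_one]
    rw [ContinuousLinearMap.one_def]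
    exact ContinuousLinearMap.norm_id_le
  · simp only [inv_one, Units.val_one]
    rw [ContinuousLinearMap.one_def]
    exact ContinuousLinearMap.norm_id_le
  · rw [amoH_period]
    simp

lemma dense_perSub (α l : ℝ) (hα : Irrational α) :
    Dense ((perSub α l : AddSubgroup ℝ) : Set ℝ) := by
  have hle : AddSubgroup.closure ({α, 1} : Set ℝ) ≤ perSub α l := by
    rw [AddSubgroup.closure_le]
    intro x hx
    simp only [Set.mem_insert_iff, Set.mem_singleton_iff] at hx
    rcases hx with rfl | rfl
    · exact alpha_mem_perSub x l
    · exact one_mem_perSub α l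
  have hd : Dense ((AddSubgroup.closure ({α, 1} : Set ℝ) : AddSubgroup ℝ) : Set ℝ) := by
    rcases AddSubgroup.dense_or_cyclic (AddSubgroup.closure ({α, 1} : Set ℝ)) with h | ⟨a, ha⟩
    · exact h
    · exfalso
      have hαmem : α ∈ AddSubgroup.closure ({α, 1} : Set ℝ) :=
        AddSubgroup.subset_closure (by simp)
      have h1mem : (1:ℝ) ∈ AddSubgroup.closure ({α, 1} : Set ℝ) :=
        AddSubgroup.subset_closure (by simp)
      rw [ha, AddSubgroup.mem_closure_singleton] at hαmem h1mem
      obtain ⟨m, hm⟩ := hαmem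
      obtain ⟨k, hk⟩ := h1mem
      have hk0 : (k:ℝ) ≠ 0 := by
        intro h
        rw [zsmul_eq_mul, h, zero_mul] at hk
        exact one_ne_zero hk.symm
      have ha0 : a = ((k:ℝ))⁻¹ := by
        rw [zsmul_eq_mul] at hk
        field_simp
        linarith [hk]
      apply hα
      refine ⟨(m : ℚ) / (k : ℚ), ?_⟩
      rw [zsmul_eq_mul, ha0] at hm
      push_cast
      rw [← hm]
      ring
  exact hd.mono hle

lemma spec_subset (α l : ℝ) (hα : Irrational α) (a b : ℝ) :
    spectrum ℂ (amoH α l a) ⊆ spectrum ℂ (amoH α l b) := by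
  intro E hE
  by_contra hE'
  rw [spectrum.notMem_iff] at hE'
  obtain ⟨u, hu⟩ := hE'
  set c := ‖((u⁻¹ : _ˣ) : XX →L[ℂ] XX)‖ with hc_def
  have hc : 0 < c := Units.norm_pos u⁻¹
  set K := 4 * π * |l| + 1 with hK_def
  have hK : 0 < K := by positivity
  have hε : 0 < 1 / (c * K) := by positivity
  obtain ⟨g, hg_mem, hg_close⟩ : ∃ g ∈ perSub α l, dist (a - b) g < 1 / (c * K) := by
    have := (dense_perSub α l hα).exists_dist_lt (a - b) hε
    obtain ⟨y, hy, hyd⟩ := this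
    exact ⟨y, hy, hyd⟩
  obtain ⟨U, hU1, hU2, hUe⟩ := mem_perSub.1 hg_mem b
  set v : (XX →L[ℂ] XX)ˣ := U * u * U⁻¹ with hv_def
  have hv_val : (v : XX →L[ℂ] XX) = algebraMap ℂ (XX →L[ℂ] XX) E - amoH α l (b + g) := by
    rw [hv_def, Units.val_mul, Units.val_mul, hu, hUe]
    rw [mul_sub, sub_mul]
    congr 1
    rw [Algebra.algebraMap_eq_smul_one, mul_smul_comm, mul_one, smul_mul_assoc]
    congr 1
    exact_mod_cast U.mul_inv
  have hv_inv : ‖((v⁻¹ : _ˣ) : XX →L[ℂ] XX)‖ ≤ c := by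
    rw [hv_def, mul_inv_rev, mul_inv_rev, inv_inv]
    calc ‖((U * (u⁻¹ * U⁻¹) : _ˣ) : XX →L[ℂ] XX)‖
        ≤ ‖(U : XX →L[ℂ] XX)‖ * ‖((u⁻¹ * U⁻¹ : _ˣ) : XX →L[ℂ] XX)‖ := by
          rw [Units.val_mul]; exact norm_mul_le _ _
      _ ≤ ‖(U : XX →L[ℂ] XX)‖ * (‖((u⁻¹ : _ˣ) : XX →L[ℂ] XX)‖ * ‖((U⁻¹ : _ˣ) : XX →L[ℂ] XX)‖) := by
          apply mul_le_mul_of_nonneg_left _ (norm_nonneg _)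
          rw [Units.val_mul]; exact norm_mul_le _ _
      _ ≤ 1 * (c * 1) := by
          rw [← hc_def]
          apply mul_le_mul hU1 _ (by positivity) zero_le_one
          exact mul_le_mul_of_nonneg_left hU2 hc.le
      _ = c := by ring
  have hvinv_pos : 0 < ‖((v⁻¹ : _ˣ) : XX →L[ℂ] XX)‖ := Units.norm_pos v⁻¹
  have hclose : ‖(algebraMap ℂ (XX →L[ℂ] XX) E - amoH α l a) - (v : XX →L[ℂ] XX)‖
      < ‖((v⁻¹ : _ˣ) : XX →L[ℂ] XX)‖⁻¹ := by
    rw [hv_val]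
    have h1 : algebraMap ℂ (XX →L[ℂ] XX) E - amoH α l a -
        (algebraMap ℂ (XX →L[ℂ] XX) E - amoH α l (b + g)) = amoH α l (b+g) - amoH α l a := by
      abel
    rw [h1]
    have h2 : ‖amoH α l (b+g) - amoH α l a‖ ≤ K * |b + g - a| := amoH_lip α l (b+g) a
    have h3 : |b + g - a| = dist (a - b) g := by
      rw [Real.dist_eq]
      rw [abs_sub_comm]
      congr 1
      ring
    have h4 : ‖amoH α l (b+g) - amoH α l a‖ < K * (1 / (c * K)) := by
      rw [h3] at h2
      calc ‖amoH α l (b+g) - amoH α l a‖ ≤ K * dist (a - b) g := h2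
        _ < K * (1 / (c * K)) := by
            apply mul_lt_mul_of_pos_left hg_close hK
    have h5 : K * (1 / (c * K)) = 1 / c := by field_simp
    rw [h5] at h4
    calc ‖amoH α l (b+g) - amoH α l a‖ < 1 / c := h4
      _ ≤ ‖((v⁻¹ : _ˣ) : XX →L[ℂ] XX)‖⁻¹ := by
          rw [one_div]
          exact inv_anti₀ hvinv_pos hv_inv
  have : IsUnit (algebraMap ℂ (XX →L[ℂ] XX) E - amoH α l a) :=
    (v.ofNearby _ hclose).isUnit
  rw [spectrum.mem_iff] at hE
  exact hE this

end AMOaux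

open AMOaux in
/-- If `α` is irrational, then the spectrum of the almost Mathieu operator `H(α,λ,θ)`
is independent of `θ`. -/
theorem stmt_9 (α l θ₁ θ₂ : ℝ) (hα : Irrational α)
    (hθ₁ : θ₁ ∈ Set.Ico (0 : ℝ) 1) (hθ₂ : θ₂ ∈ Set.Ico (0 : ℝ) 1)
    (H₁ H₂ : lp (fun _ : ℤ => ℂ) 2 →L[ℂ] lp (fun _ : ℤ => ℂ) 2)
    (hH₁sa : IsSelfAdjoint H₁) (hH₂sa : IsSelfAdjoint H₂)
    (h₁ : ∀ n : ℤ, H₁ (lpBasis n) = lpBasis (n + 1) + lpBasis (n - 1) +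
      ((2 * l * Real.cos (2 * π * (n * α + θ₁)) : ℝ) : ℂ) • lpBasis n)
    (h₂ : ∀ n : ℤ, H₂ (lpBasis n) = lpBasis (n + 1) + lpBasis (n - 1) +
      ((2 * l * Real.cos (2 * π * (n * α + θ₂)) : ℝ) : ℂ) • lpBasis n) :
    spectrum ℂ H₁ = spectrum ℂ H₂ := by
  have e1 : H₁ = amoH α l θ₁ := by
    apply clm_ext
    intro n
    rw [h₁ n, amoH_single]
    simp only [amoV]
  have e2 : H₂ = amoH α l θ₂ := by
    apply clm_ext
    intro n
    rw [h₂ n, amoH_single]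
    simp only [amoV]
  rw [e1, e2]
  exact Set.Subset.antisymm (spec_subset α l hα θ₁ θ₂) (spec_subset α l hα θ₂ θ₁)
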